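/- Let the message alphabet be binary, M = {0,1}, and consider any deterministic node-oblivious decision rule vector (f, g, h) on the k-ary tree whose error probability P(σ_root ≠ s) tends to 0 as the depth t → ∞. Then all three irreducibility assumptions must hold: (i) the dependence graph of f is strongly connected; (ii) there exists a level τ₀ > 0 such that for a node i at level τ₀, P(σ_i = μ | s = 0) > 0 for both μ ∈ {0,1}; and (iii) there exist messages μ₋, μ₊ ∈ {0,1} and a level τ_d such that for every node i at any level τ > τ_d, P(σ_i = μ₋ | s = 0) > 1/2 and P(σ_i = μ₊ | s = 1) > 1/2. -/

import Mathlib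

/-!
Node-oblivious deterministic decision rules on the `k`-ary tree: every leaf applies the
same rule `g : X → M` to its private signal (i.i.d. with law `p₀` under `s = 0` and
`p₁` under `s = 1`, both everywhere positive on the finite set `X`), every internal
non-root node applies the same rule `f : Mᵏ → M` to its children's messages, and the
root applies `h : Mᵏ → Bool`.  The state of the world `s` is uniform on `{0,1}`.

We formalize the subexponential lower bound on the error probability under the three
irreducibility assumptions, in terms of the diameter `d` of the dependence graph.
-/

/-- `p` is an everywhere-positive probability distribution on the finite set `X`. -/
def IsPositiveDist {X : Type} [Fintype X] (p : X → ℝ) : Prop :=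
  (∀ x, 0 < p x) ∧ ∑ x, p x = 1

/-- Message distribution at a node of level `τ` (distance `τ` from the leaves) for the
node-oblivious deterministic rule vector with leaf rule `g` and internal rule `f`,
when the private signals are i.i.d. with law `p`. -/
noncomputable def oblDist {X M : Type} [Fintype X] [Fintype M] [DecidableEq M] {k : ℕ}
    (p : X → ℝ) (g : X → M) (f : (Fin k → M) → M) : ℕ → M → ℝ
  | 0, μ => ∑ x, if g x = μ then p x else 0
  | τ + 1, μ => ∑ σ : Fin k → M, if f σ = μ then ∏ i, oblDist p g f τ (σ i) else 0

/-- Root error probability `P(σ_root ≠ s)` (uniform prior on `s`) for the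
node-oblivious protocol `(f, g, h)`; the root's children are at level `t`, so the
total depth is `t + 1` and there are `n = k^(t+1)` private signals. -/
noncomputable def oblErr {X M : Type} [Fintype X] [Fintype M] [DecidableEq M] {k : ℕ}
    (p₀ p₁ : X → ℝ) (g : X → M) (f : (Fin k → M) → M) (h : (Fin k → M) → Bool)
    (t : ℕ) : ℝ :=
  (1 / 2) * (∑ σ : Fin k → M, if h σ = true then ∏ i, oblDist p₀ g f t (σ i) else 0) +
  (1 / 2) * (∑ σ : Fin k → M, if h σ = false then ∏ i, oblDist p₁ g f t (σ i) else 0)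

/-- The dependence graph of `f`: there is a directed edge from `μ` to `ν` iff there is
an input vector `α ∈ Mᵏ` in which `ν` appears at least once and `f α = μ`. -/
def DepEdge {M : Type} {k : ℕ} (f : (Fin k → M) → M) (μ ν : M) : Prop :=
  ∃ α : Fin k → M, (∃ i, α i = ν) ∧ f α = μ

/-- `HasPath f n μ ν`: the dependence graph of `f` contains a directed path with
exactly `n` edges from `μ` to `ν`. -/
def HasPath {M : Type} {k : ℕ} (f : (Fin k → M) → M) : ℕ → M → M → Prop
  | 0, μ, ν => μ = ν
  | n + 1, μ, ν => ∃ ξ, DepEdge f μ ξ ∧ HasPath f n ξ ν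

/-- `d` is the diameter of the dependence graph of `f`: every ordered pair of distinct
vertices is joined by a directed path of length at most `d`, and some ordered pair of
distinct vertices has no directed path of length less than `d`. -/
def IsDiameter {M : Type} {k : ℕ} (f : (Fin k → M) → M) (d : ℕ) : Prop :=
  (∀ μ ν : M, μ ≠ ν → ∃ n, n ≤ d ∧ HasPath f n μ ν) ∧
  (∃ μ ν : M, μ ≠ ν ∧ ∀ n, n < d → ¬HasPath f n μ ν)

section Aux
variable {X : Type} [Fintype X] {k : ℕ}
  (p p₀ p₁ : X → ℝ) (g : X → Bool) (f : (Fin k → Bool) → Bool)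

lemma sum_pi_prod (d : Bool → ℝ) :
    ∑ σ : Fin k → Bool, ∏ i, d (σ i) = (d true + d false) ^ k := by
  rw [← Fintype.piFinset_univ, ← Finset.prod_univ_sum]
  simp [Fintype.sum_bool]

lemma split_sum (w : (Fin k → Bool) → Bool) (P : (Fin k → Bool) → ℝ) :
    (∑ σ : Fin k → Bool, if w σ = true then P σ else 0) +
    (∑ σ : Fin k → Bool, if w σ = false then P σ else 0) = ∑ σ : Fin k → Bool, P σ := by
  rw [← Finset.sum_add_distrib]
  refine Finset.sum_congr rfl fun σ _ => ?_
  cases hw : w σ <;> simp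

lemma single_le_condsum (w : (Fin k → Bool) → Bool) (P : (Fin k → Bool) → ℝ)
    (hP : ∀ σ, 0 ≤ P σ) (σ₀ : Fin k → Bool) (b : Bool) (hb : w σ₀ = b) :
    P σ₀ ≤ ∑ σ : Fin k → Bool, if w σ = b then P σ else 0 := by
  have := Finset.single_le_sum (f := fun σ => if w σ = b then P σ else 0)
    (fun σ _ => by (try dsimp only); split <;> [exact hP σ; exact le_rfl]) (Finset.mem_univ σ₀)
  simpa [hb] using this

lemma condsum_le_condsum (w : (Fin k → Bool) → Bool) (b : Bool)
    (P Q : (Fin k → Bool) → ℝ) (hPQ : ∀ σ, P σ ≤ Q σ) :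
    (∑ σ : Fin k → Bool, if w σ = b then P σ else 0) ≤
    (∑ σ : Fin k → Bool, if w σ = b then Q σ else 0) := by
  refine Finset.sum_le_sum fun σ _ => ?_
  split <;> [exact hPQ σ; exact le_rfl]

lemma oblDist_nonneg (hp : ∀ x, 0 ≤ p x) : ∀ τ μ, 0 ≤ oblDist p g f τ μ
  | 0, μ => Finset.sum_nonneg fun x _ => by split <;> [exact hp x; exact le_rfl]
  | τ + 1, μ => Finset.sum_nonneg fun σ _ => by
      split
      · exact Finset.prod_nonneg fun i _ => oblDist_nonneg hp τ (σ i)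
      · exact le_rfl

lemma oblDist_sum (hp : IsPositiveDist p) :
    ∀ τ, oblDist p g f τ true + oblDist p g f τ false = 1
  | 0 => by
    show (∑ x, _) + (∑ x, _) = 1
    rw [← Finset.sum_add_distrib, ← hp.2]
    refine Finset.sum_congr rfl fun x _ => ?_
    cases hg : g x <;> simp
  | τ + 1 => by
    show (∑ σ : Fin k → Bool, _) + (∑ σ : Fin k → Bool, _) = 1
    rw [split_sum, sum_pi_prod, oblDist_sum hp τ, one_pow]


end Aux

section Aux2
variable {X : Type} [Fintype X] {k : ℕ}
  (p₀ p₁ : X → ℝ) (g : X → Bool) (f : (Fin k → Bool) → Bool) (h : (Fin k → Bool) → Bool)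

/-- The "overlap" at level τ. -/
noncomputable def mOv (τ : ℕ) : ℝ :=
  min (oblDist p₀ g f τ true) (oblDist p₁ g f τ true) +
  min (oblDist p₀ g f τ false) (oblDist p₁ g f τ false)

variable (hp₀ : IsPositiveDist p₀) (hp₁ : IsPositiveDist p₁)
include hp₀ hp₁

lemma prod_min_le (τ : ℕ) (σ : Fin k → Bool) :
    (∏ i, min (oblDist p₀ g f τ (σ i)) (oblDist p₁ g f τ (σ i))) ≤
      ∏ i, oblDist p₀ g f τ (σ i) :=
  Finset.prod_le_prod
    (fun i _ => le_min (oblDist_nonneg p₀ g f (fun x => (hp₀.1 x).le) τ _)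
      (oblDist_nonneg p₁ g f (fun x => (hp₁.1 x).le) τ _))
    (fun i _ => min_le_left _ _)

lemma prod_min_le' (τ : ℕ) (σ : Fin k → Bool) :
    (∏ i, min (oblDist p₀ g f τ (σ i)) (oblDist p₁ g f τ (σ i))) ≤
      ∏ i, oblDist p₁ g f τ (σ i) :=
  Finset.prod_le_prod
    (fun i _ => le_min (oblDist_nonneg p₀ g f (fun x => (hp₀.1 x).le) τ _)
      (oblDist_nonneg p₁ g f (fun x => (hp₁.1 x).le) τ _))
    (fun i _ => min_le_right _ _)

lemma mOv_step (τ : ℕ) :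
    mOv p₀ p₁ g f τ ^ k ≤ mOv p₀ p₁ g f (τ + 1) := by
  have key : ∀ μ : Bool,
      (∑ σ : Fin k → Bool,
        if f σ = μ then ∏ i, min (oblDist p₀ g f τ (σ i)) (oblDist p₁ g f τ (σ i)) else 0)
      ≤ min (oblDist p₀ g f (τ+1) μ) (oblDist p₁ g f (τ+1) μ) := by
    intro μ
    refine le_min ?_ ?_
    · calc _ ≤ ∑ σ : Fin k → Bool, if f σ = μ then ∏ i, oblDist p₀ g f τ (σ i) else 0 :=
            condsum_le_condsum f μ _ _ (prod_min_le p₀ p₁ g f hp₀ hp₁ τ)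
        _ = oblDist p₀ g f (τ+1) μ := rfl
    · calc _ ≤ ∑ σ : Fin k → Bool, if f σ = μ then ∏ i, oblDist p₁ g f τ (σ i) else 0 :=
            condsum_le_condsum f μ _ _ (prod_min_le' p₀ p₁ g f hp₀ hp₁ τ)
        _ = oblDist p₁ g f (τ+1) μ := rfl
  have e1 := key true
  have e2 := key false
  have e3 := split_sum f
    (fun σ => ∏ i, min (oblDist p₀ g f τ (σ i)) (oblDist p₁ g f τ (σ i)))
  have e4 := sum_pi_prod (k := k) (fun μ => min (oblDist p₀ g f τ μ) (oblDist p₁ g f τ μ))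
  unfold mOv
  nlinarith [e1, e2, e3, e4]

lemma err_ge_mOv (t : ℕ) : (1/2) * mOv p₀ p₁ g f t ^ k ≤ oblErr p₀ p₁ g f h t := by
  have n0 : ∀ σ : Fin k → Bool,
      0 ≤ ∏ i, min (oblDist p₀ g f t (σ i)) (oblDist p₁ g f t (σ i)) :=
    fun σ => Finset.prod_nonneg fun i _ =>
      le_min (oblDist_nonneg p₀ g f (fun x => (hp₀.1 x).le) t _)
        (oblDist_nonneg p₁ g f (fun x => (hp₁.1 x).le) t _)
  have e1 : (∑ σ : Fin k → Bool,
      if h σ = true then ∏ i, min (oblDist p₀ g f t (σ i)) (oblDist p₁ g f t (σ i)) else 0)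
      ≤ ∑ σ : Fin k → Bool, if h σ = true then ∏ i, oblDist p₀ g f t (σ i) else 0 :=
    condsum_le_condsum h true _ _ (prod_min_le p₀ p₁ g f hp₀ hp₁ t)
  have e2 : (∑ σ : Fin k → Bool,
      if h σ = false then ∏ i, min (oblDist p₀ g f t (σ i)) (oblDist p₁ g f t (σ i)) else 0)
      ≤ ∑ σ : Fin k → Bool, if h σ = false then ∏ i, oblDist p₁ g f t (σ i) else 0 :=
    condsum_le_condsum h false _ _ (prod_min_le' p₀ p₁ g f hp₀ hp₁ t)
  have e3 := split_sum h
    (fun σ => ∏ i, min (oblDist p₀ g f t (σ i)) (oblDist p₁ g f t (σ i)))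
  have e4 := sum_pi_prod (k := k) (fun μ => min (oblDist p₀ g f t μ) (oblDist p₁ g f t μ))
  unfold oblErr mOv
  nlinarith [e1, e2, e3, e4]

lemma err_ge_single_true (t : ℕ) (σ₀ : Fin k → Bool) (hσ₀ : h σ₀ = true) :
    (1/2) * ∏ i, oblDist p₀ g f t (σ₀ i) ≤ oblErr p₀ p₁ g f h t := by
  have e1 := single_le_condsum h (fun σ => ∏ i, oblDist p₀ g f t (σ i))
    (fun σ => Finset.prod_nonneg fun i _ => oblDist_nonneg p₀ g f (fun x => (hp₀.1 x).le) t _)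
    σ₀ true hσ₀
  have e2 : (0:ℝ) ≤ ∑ σ : Fin k → Bool, if h σ = false then ∏ i, oblDist p₁ g f t (σ i) else 0 :=
    Finset.sum_nonneg fun σ _ => by
      split
      · exact Finset.prod_nonneg fun i _ => oblDist_nonneg p₁ g f (fun x => (hp₁.1 x).le) t _
      · exact le_rfl
  unfold oblErr
  nlinarith [e1, e2]

lemma err_ge_single_false (t : ℕ) (σ₀ : Fin k → Bool) (hσ₀ : h σ₀ = false) :
    (1/2) * ∏ i, oblDist p₁ g f t (σ₀ i) ≤ oblErr p₀ p₁ g f h t := by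
  have e1 := single_le_condsum h (fun σ => ∏ i, oblDist p₁ g f t (σ i))
    (fun σ => Finset.prod_nonneg fun i _ => oblDist_nonneg p₁ g f (fun x => (hp₁.1 x).le) t _)
    σ₀ false hσ₀
  have e2 : (0:ℝ) ≤ ∑ σ : Fin k → Bool, if h σ = true then ∏ i, oblDist p₀ g f t (σ i) else 0 :=
    Finset.sum_nonneg fun σ _ => by
      split
      · exact Finset.prod_nonneg fun i _ => oblDist_nonneg p₀ g f (fun x => (hp₀.1 x).le) t _
      · exact le_rfl
  unfold oblErr
  nlinarith [e1, e2]

lemma mOv_zero_ge : (∑ x, min (p₀ x) (p₁ x)) ≤ mOv p₀ p₁ g f 0 := by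
  have key : ∀ μ : Bool, (∑ x, if g x = μ then min (p₀ x) (p₁ x) else 0)
      ≤ min (oblDist p₀ g f 0 μ) (oblDist p₁ g f 0 μ) := by
    intro μ
    refine le_min ?_ ?_ <;>
    · refine Finset.sum_le_sum fun x _ => ?_
      split
      · first
        | exact min_le_left _ _
        | exact min_le_right _ _
      · exact le_rfl
  have e1 := key true
  have e2 := key false
  have e3 : (∑ x, if g x = true then min (p₀ x) (p₁ x) else 0) +
      (∑ x, if g x = false then min (p₀ x) (p₁ x) else 0) = ∑ x, min (p₀ x) (p₁ x) := by
    rw [← Finset.sum_add_distrib]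
    refine Finset.sum_congr rfl fun x _ => ?_
    cases hg : g x <;> simp
  unfold mOv
  linarith [e1, e2]

end Aux2

section Aux3
variable {X : Type} [Fintype X] {k : ℕ}
  (p p₀ p₁ : X → ℝ) (g : X → Bool) (f : (Fin k → Bool) → Bool)

lemma const_g_eq (hp₀ : IsPositiveDist p₀) (hp₁ : IsPositiveDist p₁)
    (c : Bool) (hg : ∀ x, g x = c) :
    ∀ τ μ, oblDist p₀ g f τ μ = oblDist p₁ g f τ μ
  | 0, μ => by
    show (∑ x, _) = (∑ x, _)
    rcases eq_or_ne c μ with hc | hc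
    · simp only [hg, hc, if_pos rfl, if_true]
      rw [hp₀.2, hp₁.2]
    · simp [hg, hc]
  | τ + 1, μ => by
    show (∑ σ : Fin k → Bool, _) = (∑ σ : Fin k → Bool, _)
    refine Finset.sum_congr rfl fun σ _ => ?_
    have : ∀ i, oblDist p₀ g f τ (σ i) = oblDist p₁ g f τ (σ i) :=
      fun i => const_g_eq hp₀ hp₁ c hg τ (σ i)
    simp [this]

lemma const_f_eq (hp : IsPositiveDist p) (c : Bool) (hf : ∀ σ, f σ = c) (τ : ℕ) (μ : Bool) :
    oblDist p g f (τ + 1) μ = if c = μ then 1 else 0 := by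
  show (∑ σ : Fin k → Bool, _) = _
  rcases eq_or_ne c μ with hc | hc
  · simp only [hf, hc, if_pos rfl, if_true]
    rw [sum_pi_prod, oblDist_sum p g f hp τ, one_pow]
  · simp [hf, hc]

lemma oblDist_pos (hp : IsPositiveDist p)
    (x₁ x₀ : X) (hx₁ : g x₁ = true) (hx₀ : g x₀ = false)
    (αT αF : Fin k → Bool) (hαT : f αT = true) (hαF : f αF = false) :
    ∀ τ μ, 0 < oblDist p g f τ μ
  | 0, μ => by
    have hx : ∃ x, g x = μ := by cases μ <;> [exact ⟨x₀, hx₀⟩; exact ⟨x₁, hx₁⟩]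
    obtain ⟨x, hx⟩ := hx
    have h1 : p x ≤ ∑ y, if g y = μ then p y else 0 := by
      have := Finset.single_le_sum (f := fun y => if g y = μ then p y else 0)
        (fun y _ => by (try dsimp only); split <;> [exact (hp.1 y).le; exact le_rfl])
        (Finset.mem_univ x)
      simpa [hx] using this
    exact lt_of_lt_of_le (hp.1 x) h1
  | τ + 1, μ => by
    have hα : ∃ α, f α = μ := by cases μ <;> [exact ⟨αF, hαF⟩; exact ⟨αT, hαT⟩]
    obtain ⟨α, hα⟩ := hα
    have hprod : 0 < ∏ i, oblDist p g f τ (α i) :=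
      Finset.prod_pos fun i _ => oblDist_pos hp x₁ x₀ hx₁ hx₀ αT αF hαT hαF τ (α i)
    have h1 := single_le_condsum f (fun σ => ∏ i, oblDist p g f τ (σ i))
      (fun σ => Finset.prod_nonneg fun i _ =>
        (oblDist_pos hp x₁ x₀ hx₁ hx₀ αT αF hαT hαF τ (σ i)).le) α μ hα
    exact lt_of_lt_of_le hprod h1

lemma only_const_pow (b : Bool) (hft : ∀ σ, f σ = b → σ = fun _ => b)
    (hfb : f (fun _ => b) = b) (τ : ℕ) :
    oblDist p g f (τ + 1) b = oblDist p g f τ b ^ k := by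
  show (∑ σ : Fin k → Bool, if f σ = b then ∏ i, oblDist p g f τ (σ i) else 0) = _
  rw [Finset.sum_eq_single (fun _ => b)]
  · rw [if_pos hfb, Finset.prod_const, Finset.card_univ, Fintype.card_fin]
  · intro σ _ hσ
    rw [if_neg]
    intro hfσ
    exact hσ (hft σ hfσ)
  · intro hmem
    exact absurd (Finset.mem_univ _) hmem

lemma no_persistent (u : ℕ → ℝ) (T : ℕ) (hk : 2 ≤ k)
    (hrec : ∀ t, T ≤ t → u (t + 1) = u t ^ k)
    (h1 : u T < 1) (hbig : ∀ t, T ≤ t → 3/4 < u t) : False := by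
  have hpos : ∀ t, T ≤ t → 0 ≤ u t := fun t ht => le_of_lt (lt_trans (by norm_num) (hbig t ht))
  have hc1 : u T ≤ 1 := h1.le
  have claim : ∀ n, u (T + n) ≤ u T ^ 2 ^ n := by
    intro n
    induction n with
    | zero => simpa using le_rfl
    | succ n ih =>
      have hTn : T ≤ T + n := Nat.le_add_right _ _
      have hle1 : u (T + n) ≤ 1 :=
        le_trans ih (pow_le_one₀ (hpos T le_rfl) hc1)
      have e1 : u (T + n + 1) = u (T + n) ^ k := hrec _ hTn
      have e2 : u (T + n) ^ k ≤ u (T + n) ^ 2 :=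
        pow_le_pow_of_le_one (hpos _ hTn) hle1 hk
      have e3 : u (T + n) ^ 2 ≤ (u T ^ 2 ^ n) ^ 2 :=
        pow_le_pow_left₀ (hpos _ hTn) ih 2
      calc u (T + (n + 1)) = u (T + n) ^ k := by rw [← e1]; ring_nf
        _ ≤ u (T + n) ^ 2 := e2
        _ ≤ (u T ^ 2 ^ n) ^ 2 := e3
        _ = u T ^ 2 ^ (n + 1) := by rw [← pow_mul, pow_succ]
  obtain ⟨N, hN⟩ := exists_pow_lt_of_lt_one (show (0:ℝ) < 3/4 by norm_num) h1
  have h2 : u (T + N) ≤ u T ^ N :=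
    le_trans (claim N) (pow_le_pow_of_le_one (hpos T le_rfl) hc1 (Nat.lt_two_pow_self (n := N)).le)
  have := hbig (T + N) (Nat.le_add_right _ _)
  linarith [lt_of_le_of_lt h2 hN]

end Aux3


/-- **Necessity of the irreducibility assumptions for binary messages.**  Let the
message alphabet be binary (`M = Bool`), and consider any deterministic node-oblivious
rule vector `(f, g, h)` on the `k`-ary tree whose error probability tends to `0` as
the depth tends to infinity.  Then all three irreducibility assumptions must hold:
(i) the dependence graph of `f` is strongly connected;
(ii) there is a level `τ₀ > 0` at which both messages have positive probability
under `H₀`;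
(iii) there are messages `μ₋, μ₊` and a level `τ_d` such that at every level
`τ > τ_d`, `P(σ_i = μ₋ | s = 0) > 1/2` and `P(σ_i = μ₊ | s = 1) > 1/2`
(i.e. Assumption 3 holds with `η = 1/2`). -/
theorem binary_node_oblivious_assumptions_necessary
    (X : Type) [Fintype X] (k : ℕ)
    (p₀ p₁ : X → ℝ) (hp₀ : IsPositiveDist p₀) (hp₁ : IsPositiveDist p₁)
    (g : X → Bool) (f : (Fin k → Bool) → Bool) (h : (Fin k → Bool) → Bool)
    (hconv : Filter.Tendsto (fun t => oblErr p₀ p₁ g f h t) Filter.atTop (nhds 0)) :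
    (∀ μ ν : Bool, μ ≠ ν → ∃ n, 1 ≤ n ∧ HasPath f n μ ν) ∧
    (∃ τ₀ : ℕ, 0 < τ₀ ∧ ∀ μ : Bool, 0 < oblDist p₀ g f τ₀ μ) ∧
    (∃ (μm μp : Bool) (τd : ℕ), ∀ τ, τd < τ →
      1 / 2 < oblDist p₀ g f τ μm ∧ 1 / 2 < oblDist p₁ g f τ μp) := by
  classical
  -- X is nonempty
  have hXne : Nonempty X := by
    by_contra hne
    rw [not_nonempty_iff] at hne
    have h1 := hp₀.2
    rw [Finset.univ_eq_empty, Finset.sum_empty] at h1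
    norm_num at h1
  have huniv : (Finset.univ : Finset X).Nonempty := Finset.univ_nonempty
  have hmXpos : (0:ℝ) < ∑ x, min (p₀ x) (p₁ x) :=
    Finset.sum_pos (fun x _ => lt_min (hp₀.1 x) (hp₁.1 x)) huniv
  have hmXle1 : (∑ x, min (p₀ x) (p₁ x)) ≤ 1 := by
    rw [← hp₀.2]
    exact Finset.sum_le_sum fun x _ => min_le_left _ _
  -- small error eventually
  have hev : ∀ ε : ℝ, 0 < ε → ∃ T, ∀ t, T ≤ t → oblErr p₀ p₁ g f h t < ε := by
    intro ε hε
    have h1 : ∀ᶠ t in Filter.atTop, oblErr p₀ p₁ g f h t < ε :=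
      hconv.eventually (gt_mem_nhds hε)
    rw [Filter.eventually_atTop] at h1
    obtain ⟨T, hT⟩ := h1
    exact ⟨T, hT⟩
  -- k is at least 2
  have hk : 2 ≤ k := by
    by_contra hk'
    push_neg at hk'
    have hm : ∀ t : ℕ, (∑ x, min (p₀ x) (p₁ x)) ≤ mOv p₀ p₁ g f t ^ k := by
      interval_cases k
      · intro t; rw [pow_zero]; exact hmXle1
      · intro t
        rw [pow_one]
        induction t with
        | zero => exact mOv_zero_ge p₀ p₁ g f hp₀ hp₁
        | succ t ih =>
          calc (∑ x, min (p₀ x) (p₁ x)) ≤ mOv p₀ p₁ g f t := ih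
            _ = mOv p₀ p₁ g f t ^ 1 := (pow_one _).symm
            _ ≤ mOv p₀ p₁ g f (t + 1) := mOv_step p₀ p₁ g f hp₀ hp₁ t
    obtain ⟨T, hT⟩ := hev (1/2 * ∑ x, min (p₀ x) (p₁ x)) (by positivity)
    have h1 := err_ge_mOv p₀ p₁ g f h hp₀ hp₁ T
    have h2 := hm T
    have h3 := hT T le_rfl
    linarith
  have hk0 : k ≠ 0 := by omega
  -- the main threshold
  obtain ⟨T, hT⟩ := hev (1/2 * (1/4 : ℝ) ^ k) (by positivity)
  have hm4 : ∀ t, T ≤ t → mOv p₀ p₁ g f t < 1/4 := by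
    intro t ht
    by_contra hge
    push_neg at hge
    have h1 : (1/4:ℝ) ^ k ≤ mOv p₀ p₁ g f t ^ k := pow_le_pow_left₀ (by norm_num) hge k
    have h2 := err_ge_mOv p₀ p₁ g f h hp₀ hp₁ t
    have h3 := hT t ht
    linarith
  have dich : ∀ t, T ≤ t →
      (3/4 < oblDist p₀ g f t true ∧ oblDist p₁ g f t true < 1/4) ∨
      (oblDist p₀ g f t true < 1/4 ∧ 3/4 < oblDist p₁ g f t true) := by
    intro t ht
    have hm := hm4 t ht
    have s0 := oblDist_sum p₀ g f hp₀ t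
    have s1 := oblDist_sum p₁ g f hp₁ t
    have n0 : (0:ℝ) ≤ oblDist p₀ g f t true :=
      oblDist_nonneg p₀ g f (fun x => (hp₀.1 x).le) t true
    have n1 : (0:ℝ) ≤ oblDist p₁ g f t true :=
      oblDist_nonneg p₁ g f (fun x => (hp₁.1 x).le) t true
    have n0f : (0:ℝ) ≤ oblDist p₀ g f t false :=
      oblDist_nonneg p₀ g f (fun x => (hp₀.1 x).le) t false
    have n1f : (0:ℝ) ≤ oblDist p₁ g f t false :=
      oblDist_nonneg p₁ g f (fun x => (hp₁.1 x).le) t false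
    unfold mOv at hm
    rcases le_total (oblDist p₀ g f t true) (oblDist p₁ g f t true) with hle | hle
    · rw [min_eq_left hle, min_eq_right (by linarith : oblDist p₁ g f t false ≤ oblDist p₀ g f t false)] at hm
      right
      constructor <;> linarith
    · rw [min_eq_right hle, min_eq_left (by linarith : oblDist p₀ g f t false ≤ oblDist p₁ g f t false)] at hm
      left
      constructor <;> linarith
  have h34 : (1/4:ℝ) ^ k < (3/4:ℝ) ^ k := by
    apply pow_lt_pow_left₀ (by norm_num) (by norm_num) hk0
  -- cross exclusion
  have cross : ∀ t t', T ≤ t → T ≤ t' →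
      3/4 < oblDist p₀ g f t true → 3/4 < oblDist p₁ g f t' true → False := by
    intro t t' ht ht' hq hr
    have hhc : h (fun _ => true) = false := by
      cases hcc : h (fun _ => true) with
      | false => rfl
      | true =>
        exfalso
        have e := err_ge_single_true p₀ p₁ g f h hp₀ hp₁ t (fun _ => true) hcc
        rw [Finset.prod_const, Finset.card_univ, Fintype.card_fin] at e
        have h1 : (3/4:ℝ) ^ k ≤ oblDist p₀ g f t true ^ k :=
          pow_le_pow_left₀ (by norm_num) hq.le k
        have h3 := hT t ht
        linarith
    have e := err_ge_single_false p₀ p₁ g f h hp₀ hp₁ t' (fun _ => true) hhc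
    rw [Finset.prod_const, Finset.card_univ, Fintype.card_fin] at e
    have h1 : (3/4:ℝ) ^ k ≤ oblDist p₁ g f t' true ^ k :=
      pow_le_pow_left₀ (by norm_num) hr.le k
    have h3 := hT t' ht'
    linarith
  -- the branch is globally constant
  have hAB : (∀ t, T ≤ t → 3/4 < oblDist p₀ g f t true ∧ oblDist p₁ g f t true < 1/4)
      ∨ (∀ t, T ≤ t → oblDist p₀ g f t true < 1/4 ∧ 3/4 < oblDist p₁ g f t true) := by
    by_cases hA : ∀ t, T ≤ t → 3/4 < oblDist p₀ g f t true ∧ oblDist p₁ g f t true < 1/4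
    · exact Or.inl hA
    · right
      push_neg at hA
      obtain ⟨t₀, ht₀, hnA⟩ := hA
      have hB₀ : oblDist p₀ g f t₀ true < 1/4 ∧ 3/4 < oblDist p₁ g f t₀ true := by
        rcases dich t₀ ht₀ with hAt | hBt
        · exact absurd hAt.2 (by simpa using hnA hAt.1)
        · exact hBt
      intro t ht
      rcases dich t ht with hAt | hBt
      · exact (cross t t₀ ht ht₀ hAt.1 hB₀.2).elim
      · exact hBt
  -- g is not constant
  have hgne : (∃ x, g x = true) ∧ (∃ x, g x = false) := by
    have hgc : ∀ c : Bool, (∀ x, g x = c) → False := by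
      intro c hgc
      have heq := const_g_eq p₀ p₁ g f hp₀ hp₁ c hgc
      rcases hAB with hA | hB
      · have h1 := hA T le_rfl
        rw [heq T true] at h1
        linarith [h1.1, h1.2]
      · have h1 := hB T le_rfl
        rw [heq T true] at h1
        linarith [h1.1, h1.2]
    constructor
    · by_contra hg
      push_neg at hg
      exact hgc false fun x => by
        cases hgx : g x
        · rfl
        · exact absurd hgx (hg x)
    · by_contra hg
      push_neg at hg
      exact hgc true fun x => by
        cases hgx : g x
        · exact absurd hgx (hg x)
        · rfl
  obtain ⟨⟨x₁, hx₁⟩, ⟨x₀, hx₀⟩⟩ := hgne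
  -- f is not constant
  have hfne : (∃ α : Fin k → Bool, f α = true) ∧ (∃ α : Fin k → Bool, f α = false) := by
    have hfc : ∀ c : Bool, (∀ σ : Fin k → Bool, f σ = c) → False := by
      intro c hfc
      have heq : oblDist p₀ g f (T + 1) true = oblDist p₁ g f (T + 1) true := by
        rw [const_f_eq p₀ g f hp₀ c hfc T true, const_f_eq p₁ g f hp₁ c hfc T true]
      rcases hAB with hA | hB
      · have h1 := hA (T + 1) (Nat.le_succ T)
        rw [heq] at h1
        linarith [h1.1, h1.2]
      · have h1 := hB (T + 1) (Nat.le_succ T)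
        rw [heq] at h1
        linarith [h1.1, h1.2]
    constructor
    · by_contra hf
      push_neg at hf
      exact hfc false fun σ => by
        cases hfσ : f σ
        · rfl
        · exact absurd hfσ (hf σ)
    · by_contra hf
      push_neg at hf
      exact hfc true fun σ => by
        cases hfσ : f σ
        · exact absurd hfσ (hf σ)
        · rfl
  obtain ⟨⟨αT, hαT⟩, ⟨αF, hαF⟩⟩ := hfne
  have pos0 : ∀ τ μ, 0 < oblDist p₀ g f τ μ :=
    oblDist_pos p₀ g f hp₀ x₁ x₀ hx₁ hx₀ αT αF hαT hαF
  have pos1 : ∀ τ μ, 0 < oblDist p₁ g f τ μ :=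
    oblDist_pos p₁ g f hp₁ x₁ x₀ hx₁ hx₀ αT αF hαT hαF
  refine ⟨?_, ⟨1, one_pos, fun μ => pos0 1 μ⟩, ?_⟩
  · -- (i) strong connectivity
    intro μ ν hμν
    have hcases : (μ = true ∧ ν = false) ∨ (μ = false ∧ ν = true) := by
      cases μ <;> cases ν <;> simp_all
    rcases hcases with ⟨hμ, hν⟩ | ⟨hμ, hν⟩ <;> subst hμ <;> subst hν
    · -- path from true to false
      by_cases hed : ∃ α : Fin k → Bool, (∃ i, α i = false) ∧ f α = true
      · exact ⟨1, le_rfl, ⟨false, hed, rfl⟩⟩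
      · exfalso
        push_neg at hed
        have hft : ∀ σ : Fin k → Bool, f σ = true → σ = fun _ => true := by
          intro σ hσ
          funext i
          show σ i = true
          cases hσi : σ i
          · exact absurd hσ (hed σ ⟨i, hσi⟩)
          · rfl
        have hfT : f (fun _ => true) = true := by
          rw [← hft αT hαT]; exact hαT
        rcases hAB with hA | hB
        · have hlt1 : oblDist p₀ g f T true < 1 := by
            have h1 := pos0 T false
            have h2 := oblDist_sum p₀ g f hp₀ T
            linarith
          exact no_persistent (k := k) (fun t => oblDist p₀ g f t true) T hk
            (fun t _ => only_const_pow p₀ g f true hft hfT t) hlt1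
            (fun t ht => (hA t ht).1)
        · have hlt1 : oblDist p₁ g f T true < 1 := by
            have h1 := pos1 T false
            have h2 := oblDist_sum p₁ g f hp₁ T
            linarith
          exact no_persistent (k := k) (fun t => oblDist p₁ g f t true) T hk
            (fun t _ => only_const_pow p₁ g f true hft hfT t) hlt1
            (fun t ht => (hB t ht).2)
    · -- path from false to true
      by_cases hed : ∃ α : Fin k → Bool, (∃ i, α i = true) ∧ f α = false
      · exact ⟨1, le_rfl, ⟨true, hed, rfl⟩⟩
      · exfalso
        push_neg at hed
        have hff : ∀ σ : Fin k → Bool, f σ = false → σ = fun _ => false := by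
          intro σ hσ
          funext i
          show σ i = false
          cases hσi : σ i
          · rfl
          · exact absurd hσ (hed σ ⟨i, hσi⟩)
        have hfF : f (fun _ => false) = false := by
          rw [← hff αF hαF]; exact hαF
        rcases hAB with hA | hB
        · have hlt1 : oblDist p₁ g f T false < 1 := by
            have h1 := pos1 T true
            have h2 := oblDist_sum p₁ g f hp₁ T
            linarith
          refine no_persistent (k := k) (fun t => oblDist p₁ g f t false) T hk
            (fun t _ => only_const_pow p₁ g f false hff hfF t) hlt1 ?_
          intro t ht
          have h1 := (hA t ht).2
          have h2 := oblDist_sum p₁ g f hp₁ t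
          linarith
        · have hlt1 : oblDist p₀ g f T false < 1 := by
            have h1 := pos0 T true
            have h2 := oblDist_sum p₀ g f hp₀ T
            linarith
          refine no_persistent (k := k) (fun t => oblDist p₀ g f t false) T hk
            (fun t _ => only_const_pow p₀ g f false hff hfF t) hlt1 ?_
          intro t ht
          have h1 := (hB t ht).1
          have h2 := oblDist_sum p₀ g f hp₀ t
          linarith
  · -- (iii)
    rcases hAB with hA | hB
    · refine ⟨true, false, T, fun τ hτ => ⟨?_, ?_⟩⟩
      · linarith [(hA τ hτ.le).1]
      · have h1 := (hA τ hτ.le).2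
        have h2 := oblDist_sum p₁ g f hp₁ τ
        linarith
    · refine ⟨false, true, T, fun τ hτ => ⟨?_, ?_⟩⟩
      · have h1 := (hB τ hτ.le).1
        have h2 := oblDist_sum p₀ g f hp₀ τ
        linarith
      · linarith [(hB τ hτ.le).2]
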